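/- arXiv:1111.1379 — 2 statements merged into one kernel-verified Lean document; each statement's English description precedes it below -/
import Mathlib

section
/- Let P be a nonconstant polynomial over ℂ. Then every zero of the derivative P' lies in the convex hull of the set of zeros of P. -/
/-- Gauss–Lucas theorem: every zero of `P'` lies in the convex hull of the zeros of `P`. -/
theorem stmt_2 (P : Polynomial ℂ) (hP : 0 < P.natDegree) (z : ℂ)
    (hz : P.derivative.eval z = 0) :
    z ∈ convexHull ℝ {w : ℂ | P.eval w = 0} := by
  classical
  by_cases hPz : P.eval z = 0
  · exact subset_convexHull ℝ _ hPz
  set R : Multiset ℂ := P.roots with hR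
  have hP0 : P ≠ 0 := fun h => by simp [h] at hP
  have ha : P.leadingCoeff ≠ 0 := Polynomial.leadingCoeff_ne_zero.mpr hP0
  have hcard : R.card = P.natDegree :=
    (Polynomial.splits_iff_card_roots.mp (IsAlgClosed.splits P))
  have hfac : Polynomial.C P.leadingCoeff *
      (R.map fun r => Polynomial.X - Polynomial.C r).prod = P :=
    Polynomial.C_leadingCoeff_mul_prod_multiset_X_sub_C hcard
  have hroot : ∀ r ∈ R, P.eval r = 0 := fun r hr =>
    (Polynomial.mem_roots hP0).mp hr
  have hne : ∀ r ∈ R, z - r ≠ 0 := by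
    intro r hr h
    exact hPz ((sub_eq_zero.mp h) ▸ hroot r hr)
  -- the full product is nonzero
  have hQ : (R.map fun s => z - s).prod ≠ 0 := by
    intro h
    apply hPz
    rw [← hfac, Polynomial.eval_mul, Polynomial.eval_multiset_prod]
    simp only [Multiset.map_map, Function.comp]
    simp only [Polynomial.eval_sub, Polynomial.eval_X, Polynomial.eval_C]
    rw [h, mul_zero]
  -- derivative evaluation: sum over roots of products over erased multiset
  have hd : (R.map fun r => ((R.erase r).map fun s => z - s).prod).sum = 0 := by
    have h1 : P.derivative = Polynomial.C P.leadingCoeff *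
        Polynomial.derivative (R.map fun r => Polynomial.X - Polynomial.C r).prod := by
      conv_lhs => rw [← hfac]
      rw [Polynomial.derivative_mul, Polynomial.derivative_C, zero_mul, zero_add]
    rw [h1, Polynomial.derivative_prod] at hz
    simp only [Polynomial.derivative_sub, Polynomial.derivative_X, Polynomial.derivative_C,
      sub_zero, mul_one] at hz
    rw [Polynomial.eval_mul, Polynomial.eval_C] at hz
    rcases mul_eq_zero.mp hz with h | h
    · exact absurd h ha
    · have h2 : ((Multiset.map (fun r =>
          (Multiset.map (fun s => Polynomial.X - Polynomial.C s) (R.erase r)).prod) R).map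
          (Polynomial.eval z)).sum = 0 := by
        rw [← Polynomial.coe_evalRingHom, ← map_multiset_sum]
        exact h
      rw [Multiset.map_map] at h2
      rw [← h2]
      congr 1
      apply Multiset.map_congr rfl
      intro r _
      simp only [Function.comp_apply, Polynomial.coe_evalRingHom, Polynomial.eval_multiset_prod,
        Multiset.map_map, Polynomial.eval_sub, Polynomial.eval_X, Polynomial.eval_C]
  -- each erased product equals Q * (z - r)⁻¹
  have hterm : ∀ r ∈ R, ((R.erase r).map fun s => z - s).prod =
      (R.map fun s => z - s).prod * (z - r)⁻¹ := by
    intro r hr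
    conv_rhs => rw [← Multiset.cons_erase hr]
    rw [Multiset.map_cons, Multiset.prod_cons, mul_comm (z - r), mul_assoc,
      mul_inv_cancel₀ (hne r hr), mul_one]
  have hinv : (R.map fun r => (z - r)⁻¹).sum = 0 := by
    have h2 : (R.map fun r => (R.map fun s => z - s).prod * (z - r)⁻¹).sum = 0 := by
      rw [← hd]
      congr 1
      exact (Multiset.map_congr rfl hterm).symm
    rw [Multiset.sum_map_mul_left] at h2
    exact (mul_eq_zero.mp h2).resolve_left hQ
  -- take conjugates: ∑ t r • (z - r) = 0 with t r = (normSq (z-r))⁻¹ > 0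
  set t : ℂ → ℝ := fun r => (Complex.normSq (z - r))⁻¹ with ht
  have hkey : (R.map fun r => ((t r : ℂ)) * (z - r)).sum = 0 := by
    have := congrArg (starRingEnd ℂ) hinv
    rw [map_multiset_sum, Multiset.map_map, map_zero] at this
    rw [← this]
    congr 1
    apply Multiset.map_congr rfl
    intro r _
    simp only [Function.comp_apply, map_inv₀, Complex.inv_def, Complex.normSq_conj,
      Complex.conj_conj, map_mul, map_inv₀, Complex.conj_ofReal, ht]
    push_cast
    ring
  -- pass to the finset of distinct roots
  set s : Finset ℂ := R.toFinset with hs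
  set w : ℂ → ℝ := fun r => (R.count r : ℝ) * t r with hw
  have hkey2 : ∑ r ∈ s, (w r : ℂ) * (z - r) = 0 := by
    rw [← hkey, Finset.sum_multiset_map_count]
    apply Finset.sum_congr rfl
    intro r _
    rw [nsmul_eq_mul, hw]
    push_cast
    ring
  have hw0 : ∀ r ∈ s, 0 ≤ w r := by
    intro r _
    exact mul_nonneg (Nat.cast_nonneg _) (inv_nonneg.mpr (Complex.normSq_nonneg _))
  have hRne : R ≠ 0 := by
    intro h
    rw [h] at hcard
    simp at hcard
    omega
  have hT : 0 < ∑ r ∈ s, w r := by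
    apply Finset.sum_pos
    · intro r hr
      have hrR : r ∈ R := Multiset.mem_toFinset.mp hr
      apply mul_pos
      · exact_mod_cast Multiset.count_pos.mpr hrR
      · exact inv_pos.mpr (Complex.normSq_pos.mpr (hne r hrR))
    · obtain ⟨r, hr⟩ := Multiset.exists_mem_of_ne_zero hRne
      exact ⟨r, Multiset.mem_toFinset.mpr hr⟩
  -- z is the center of mass of the roots with weights w
  have hcm : s.centerMass w id = z := by
    have hsum : ∑ r ∈ s, w r • (r : ℂ) = (∑ r ∈ s, w r) • z := by
      have h3 : ∑ r ∈ s, (w r : ℂ) * r = ∑ r ∈ s, (w r : ℂ) * z := by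
        have h4 : ∑ r ∈ s, ((w r : ℂ) * z - (w r : ℂ) * r) = 0 := by
          rw [← hkey2]
          apply Finset.sum_congr rfl
          intro r _
          ring
        rw [Finset.sum_sub_distrib] at h4
        exact (sub_eq_zero.mp h4).symm
      calc ∑ r ∈ s, w r • (r : ℂ) = ∑ r ∈ s, (w r : ℂ) * r := by
            apply Finset.sum_congr rfl; intro r _; rw [Complex.real_smul]
        _ = ∑ r ∈ s, (w r : ℂ) * z := h3
        _ = (∑ r ∈ s, (w r : ℂ)) * z := by rw [← Finset.sum_mul]
        _ = ((∑ r ∈ s, w r : ℝ) : ℂ) * z := by push_cast; ring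
        _ = (∑ r ∈ s, w r) • z := by rw [Complex.real_smul]
    rw [Finset.centerMass]
    simp only [id_eq]
    rw [hsum, smul_smul, inv_mul_cancel₀ (ne_of_gt hT), one_smul]
  rw [← hcm]
  apply Finset.centerMass_mem_convexHull s hw0 hT
  intro r hr
  exact hroot r (Multiset.mem_toFinset.mp hr)
end

section
/- Let r ≥ 1, k ≥ 3 be integers, ℓ = k + r. Define f̃_n(z) = (n^{(k−1)ℓ}/(k! ℓ^k)) (z^ℓ − 1/n^ℓ)^k − z^ℓ/(ℓ(ℓ−1)⋯(r+1)). Then there exists a constant C₁ ∈ (0, ∞) such that for all sufficiently large n, every zero z of f̃_n in the unit disc satisfies |z| ≤ C₁/n. -/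
/-- For `f̃_n(z) = (n^{(k-1)ℓ}/(k! ℓ^k))(z^ℓ - 1/n^ℓ)^k - z^ℓ/(ℓ(ℓ-1)⋯(r+1))` with
`ℓ = k + r`, there is `C₁ > 0` such that for all sufficiently large `n`, every zero of
`f̃_n` in the unit disc satisfies `|z| ≤ C₁/n`. -/
theorem stmt_13 (r k : ℕ) (hr : 1 ≤ r) (hk : 3 ≤ k) (ℓ : ℕ) (hℓ : ℓ = k + r)
    (g : ℕ → ℂ → ℂ)
    (hg : ∀ n : ℕ, ∀ z : ℂ, g n z =
      ((n : ℂ) ^ ((k - 1) * ℓ) / ((Nat.factorial k : ℂ) * (ℓ : ℂ) ^ k)) *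
          (z ^ ℓ - 1 / (n : ℂ) ^ ℓ) ^ k -
        z ^ ℓ / ((Nat.factorial ℓ : ℂ) / (Nat.factorial r : ℂ))) :
    ∃ C₁ : ℝ, 0 < C₁ ∧ ∃ N : ℕ, ∀ n : ℕ, N ≤ n → ∀ z : ℂ, ‖z‖ < 1 → g n z = 0 →
      ‖z‖ ≤ C₁ / n := by
  obtain ⟨a, rfl⟩ : ∃ a, k = a + 1 := ⟨k - 1, by omega⟩
  have hℓ0 : ℓ ≠ 0 := by omega
  set c : ℂ := (Nat.factorial (a + 1) : ℂ) * (ℓ : ℂ) ^ (a + 1) * (Nat.factorial r : ℂ) /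
      (Nat.factorial ℓ : ℂ) with hc
  set P : Polynomial ℂ := (Polynomial.X ^ ℓ - 1) ^ (a + 1) - Polynomial.C c * Polynomial.X ^ ℓ
    with hP
  -- P ≠ 0
  have hmon : ((Polynomial.X ^ ℓ - 1 : Polynomial ℂ)).Monic := by
    simpa using Polynomial.monic_X_pow_sub_C (1 : ℂ) hℓ0
  have hdeg : ((Polynomial.X ^ ℓ - 1 : Polynomial ℂ)).natDegree = ℓ := by
    simpa using Polynomial.natDegree_X_pow_sub_C (n := ℓ) (r := (1 : ℂ))
  have hcoeff : P.coeff ((a + 1) * ℓ) = 1 := by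
    have h1 : (((Polynomial.X ^ ℓ - 1 : Polynomial ℂ)) ^ (a + 1)).coeff ((a + 1) * ℓ) = 1 := by
      have := (hmon.pow (n := a + 1)).coeff_natDegree
      rwa [Polynomial.natDegree_pow, hdeg] at this
    have h2 : ((Polynomial.C c * Polynomial.X ^ ℓ : Polynomial ℂ)).coeff ((a + 1) * ℓ) = 0 := by
      rw [Polynomial.coeff_C_mul, Polynomial.coeff_X_pow, if_neg (by nlinarith), mul_zero]
    simp [hP, Polynomial.coeff_sub, h1, h2]
  have hP0 : P ≠ 0 := fun h => by simp [h] at hcoeff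
  -- bound on roots
  have hfin : {w : ℂ | P.IsRoot w}.Finite := Polynomial.finite_setOf_isRoot hP0
  obtain ⟨M, hM⟩ := (hfin.image norm).bddAbove
  refine ⟨max M 1, lt_of_lt_of_le one_pos (le_max_right _ _), 1, fun n hn z hz hgz => ?_⟩
  have hn0 : (n : ℂ) ≠ 0 := Nat.cast_ne_zero.mpr (by omega)
  have hkf : (Nat.factorial (a + 1) : ℂ) ≠ 0 := Nat.cast_ne_zero.mpr (Nat.factorial_ne_zero _)
  have hlf : (Nat.factorial ℓ : ℂ) ≠ 0 := Nat.cast_ne_zero.mpr (Nat.factorial_ne_zero _)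
  have hrf : (Nat.factorial r : ℂ) ≠ 0 := Nat.cast_ne_zero.mpr (Nat.factorial_ne_zero _)
  have hl0 : (ℓ : ℂ) ≠ 0 := Nat.cast_ne_zero.mpr hℓ0
  rw [hg] at hgz
  have hroot : P.IsRoot ((n : ℂ) * z) := by
    have ha : a + 1 - 1 = a := by omega
    rw [ha] at hgz
    simp only [Polynomial.IsRoot, hP, Polynomial.eval_sub, Polynomial.eval_pow,
      Polynomial.eval_mul, Polynomial.eval_C, Polynomial.eval_X, Polynomial.eval_one]
    field_simp at hgz
    have hne : ((n:ℂ)^(a*ℓ) * (Nat.factorial ℓ : ℂ)) ≠ 0 := mul_ne_zero (pow_ne_zero _ hn0) hlf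
    refine mul_left_cancel₀ hne ?_
    rw [mul_zero, hc]
    have hm : ((n:ℂ)^ℓ) ≠ 0 := pow_ne_zero _ hn0
    rw [div_pow] at hgz
    have hx : ((z ^ ℓ * (n:ℂ) ^ ℓ - 1) ^ (a + 1) / ((n:ℂ) ^ ℓ) ^ (a + 1)) * ((n:ℂ) ^ ℓ) ^ (a + 1)
        = (z ^ ℓ * (n:ℂ) ^ ℓ - 1) ^ (a + 1) := div_mul_cancel₀ _ (pow_ne_zero _ hm)
    have hf : (Nat.factorial ℓ : ℂ) * ((Nat.factorial (a + 1) : ℂ) * (ℓ : ℂ) ^ (a + 1) *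
        (Nat.factorial r : ℂ) / (Nat.factorial ℓ : ℂ)) =
        (Nat.factorial (a + 1) : ℂ) * (ℓ : ℂ) ^ (a + 1) * (Nat.factorial r : ℂ) :=
      mul_div_cancel₀ _ hlf
    rw [mul_pow]
    have he : (n:ℂ) ^ (a * ℓ) * (n:ℂ) ^ ℓ = ((n:ℂ) ^ ℓ) ^ (a + 1) := by
      rw [← pow_mul, ← pow_add]; ring_nf
    linear_combination ((n:ℂ) ^ ℓ) ^ (a + 1) * hgz - (n:ℂ) ^ (a * ℓ) * (Nat.factorial ℓ : ℂ) * hx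
      - (n:ℂ) ^ (a * ℓ) * (n:ℂ) ^ ℓ * z ^ ℓ * hf
      + (Nat.factorial (a + 1) : ℂ) * (ℓ : ℂ) ^ (a + 1) * (Nat.factorial r : ℂ) * z ^ ℓ * he
  have hle : ‖(n : ℂ) * z‖ ≤ M := hM ⟨_, hroot, rfl⟩
  have hn1 : (1 : ℝ) ≤ n := by exact_mod_cast hn
  rw [norm_mul, Complex.norm_natCast] at hle
  rw [le_div_iff₀ (by linarith)]
  calc ‖z‖ * n = n * ‖z‖ := by ring
    _ ≤ M := hle
    _ ≤ max M 1 := le_max_left _ _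
end
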